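/- Let F be a finite field with q elements, 1 ≤ m ≤ n−1, and α an antichain of size m in [n]×[m]. Then the Schubert cell O_α of reduced reverse column echelon matrices with pivot-set α has cardinality q^{|D(α)|} = q^{|λ|}, where λ = φ_m(α) and |λ| = λ_1 + … + λ_{n−m}. -/
import Mathlib


open Matrix

namespace SchubertCell

/-- The strict down-set of a subset of a poset. -/
def Down {X : Type*} [Preorder X] (Y : Set X) : Set X := {x | ∃ y ∈ Y, x < y}

variable {F : Type*} [Field F] {n : ℕ}

/-- The pivot-set of a matrix: the maximal elements of the support
under the componentwise (product) order on indices. -/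
def Piv (M : Matrix (Fin n) (Fin n) F) : Set (Fin n × Fin n) :=
  {p | M p.1 p.2 ≠ 0 ∧ ∀ q : Fin n × Fin n, p < q → M q.1 q.2 = 0}

/-- Upper triangular matrix. -/
def UpperTri (G : Matrix (Fin n) (Fin n) F) : Prop := ∀ i j : Fin n, j < i → G i j = 0

/-- `M i j` is the last (largest row index) nonzero entry of column `j`. -/
def IsLast (M : Matrix (Fin n) (Fin n) F) (i j : Fin n) : Prop :=
  M i j ≠ 0 ∧ ∀ i' : Fin n, i < i' → M i' j = 0

/-- Reduced reverse column echelon form: (CE1), (CE2), (CE3). -/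
def IsRRCEF (M : Matrix (Fin n) (Fin n) F) : Prop :=
  (∀ j j' : Fin n, j ≤ j' → (∃ i, M i j' ≠ 0) → ∃ i, M i j ≠ 0) ∧
  (∀ i j i' j' : Fin n, IsLast M i j → IsLast M i' j' → j < j' → i' < i) ∧
  (∀ i j : Fin n, IsLast M i j → M i j = 1 ∧ ∀ j' : Fin n, j' ≠ j → M i j' = 0)

/-- `D(α)`: elements of the strict down-set of `α` whose row contains no element of `α`. -/
def DSet (α : Set (Fin n × Fin n)) : Set (Fin n × Fin n) :=
  {p | p ∈ Down α ∧ ∀ k : Fin n, (p.1, k) ∉ α}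

lemma exists_isLast (M : Matrix (Fin n) (Fin n) F) (j : Fin n) (h : ∃ i, M i j ≠ 0) :
    ∃ i, IsLast M i j := by
  classical
  obtain ⟨i0, hi0⟩ := h
  set s : Finset (Fin n) := Finset.univ.filter (fun i => M i j ≠ 0) with hs
  have hne : s.Nonempty := ⟨i0, by simp [hs, hi0]⟩
  refine ⟨s.max' hne, ?_, fun i' hi' => ?_⟩
  · have := s.max'_mem hne; simpa [hs] using this
  · by_contra h0
    have : i' ∈ s := by simp [hs, h0]
    exact absurd (s.le_max' i' this) (not_le.mpr hi')

lemma piv_eq_isLast {M : Matrix (Fin n) (Fin n) F} (hM : IsRRCEF M) :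
    Piv M = {p | IsLast M p.1 p.2} := by
  obtain ⟨h1, h2, h3⟩ := hM
  ext ⟨i, j⟩
  simp only [Piv, IsLast, Set.mem_setOf_eq]
  constructor
  · rintro ⟨hne, hmax⟩
    exact ⟨hne, fun i' hi' => hmax (i', j) (Prod.lt_iff.mpr (Or.inl ⟨hi', le_rfl⟩))⟩
  · rintro ⟨hne, hlast⟩
    refine ⟨hne, ?_⟩
    rintro ⟨i', j'⟩ hlt
    have hjle : j ≤ j' := (Prod.le_def.1 hlt.le).2
    have hile : i ≤ i' := (Prod.le_def.1 hlt.le).1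
    by_contra h0
    rcases eq_or_lt_of_le hjle with he | hl
    · rcases eq_or_lt_of_le hile with he2 | hl2
      · exact absurd hlt ((show ((i : Fin n), j) = (i', j') from Prod.ext he2 he) ▸ lt_irrefl _)
      · exact h0 (he ▸ hlast i' hl2)
    · obtain ⟨i'', hi''⟩ := exists_isLast M j' ⟨i', h0⟩
      have hlt2 : i'' < i := h2 i j i'' j' ⟨hne, hlast⟩ hi'' hl
      have hle2 : i' ≤ i'' := by
        by_contra hc; push_neg at hc; exact h0 (hi''.2 i' hc)
      exact absurd (lt_of_le_of_lt (hile.trans hle2) hlt2) (lt_irrefl i)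

theorem schubert_cell_card {F : Type*} [Field F] [Fintype F] {n m q : ℕ}
    (hq : Fintype.card F = q) (hm1 : 1 ≤ m) (hm2 : m ≤ n - 1)
    (α : Set (Fin n × Fin n)) (hanti : IsAntichain (· ≤ ·) α)
    (hcol : ∀ p ∈ α, (p.2 : ℕ) < m) (hcard : α.ncard = m) :
    Nat.card {M : Matrix (Fin n) (Fin n) F // IsRRCEF M ∧ Piv M = α} =
      q ^ (DSet α).ncard ∧
    (∀ (l : Fin (n - m) → ℕ) (d : Fin (n - m) → Fin n), StrictMono d →
      (∀ i : Fin n, (∀ k : Fin n, (i, k) ∉ α) ↔ i ∈ Set.range d) →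
      (∀ i : Fin (n - m), l i = Set.ncard {j : Fin n | (d i, j) ∈ DSet α}) →
      (DSet α).ncard = ∑ i, l i) := by
  classical
  have hn2 : 2 ≤ n := by omega
  have hmn : m < n := by omega
  haveI : NeZero n := ⟨by omega⟩
  -- snd is injective on α
  have hsnd : Set.InjOn Prod.snd α := by
    intro p hp q hq hpq
    by_contra hne
    rcases le_total p.1 q.1 with h | h
    · exact hanti hp hq hne (Prod.le_def.mpr ⟨h, hpq.le⟩)
    · exact hanti hq hp (Ne.symm hne) (Prod.le_def.mpr ⟨h, hpq.ge⟩)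
  have hfst : Set.InjOn Prod.fst α := by
    intro p hp q hq hpq
    by_contra hne
    rcases le_total p.2 q.2 with h | h
    · exact hanti hp hq hne (Prod.le_def.mpr ⟨hpq.le, h⟩)
    · exact hanti hq hp (Ne.symm hne) (Prod.le_def.mpr ⟨hpq.ge, h⟩)
  -- every column j < m contains an element of α
  have hex : ∀ j : Fin n, (j : ℕ) < m → ∃ r, (r, j) ∈ α := by
    intro j hj
    have himsub : Prod.snd '' α ⊆ {j : Fin n | (j : ℕ) < m} := by
      rintro c ⟨p, hp, rfl⟩; exact hcol p hp
    have hrange : {j : Fin n | (j : ℕ) < m} = Set.range (Fin.castLE hmn.le) := by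
      ext c
      constructor
      · intro hc; exact ⟨⟨(c : ℕ), hc⟩, Fin.ext rfl⟩
      · rintro ⟨k, rfl⟩; exact k.2
    have hncard : {j : Fin n | (j : ℕ) < m}.ncard = m := by
      rw [hrange, ← Nat.card_coe_set_eq,
        Nat.card_congr (Equiv.ofInjective _ (Fin.castLE_injective hmn.le)).symm]
      simp
    have him : Prod.snd '' α = {j : Fin n | (j : ℕ) < m} := by
      apply Set.eq_of_subset_of_ncard_le himsub _ (Set.toFinite _)
      rw [hncard, Set.ncard_image_of_injOn hsnd, hcard]
    have : j ∈ Prod.snd '' α := by rw [him]; exact hj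
    obtain ⟨p, hp, hpj⟩ := this
    exact ⟨p.1, by rwa [show (p.1, j) = p from Prod.ext rfl hpj.symm]⟩
  set rf : Fin n → Fin n := fun j => if h : ∃ r, (r, j) ∈ α then h.choose else 0 with hrf
  have hrmem : ∀ j : Fin n, (j : ℕ) < m → (rf j, j) ∈ α := by
    intro j hj
    have h := hex j hj
    simp only [hrf, dif_pos h]
    exact h.choose_spec
  have hmem_iff : ∀ p : Fin n × Fin n, p ∈ α ↔ ((p.2 : ℕ) < m ∧ p.1 = rf p.2) := by
    intro p
    constructor
    · intro hp
      have hc := hcol p hp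
      refine ⟨hc, ?_⟩
      have h2 := hrmem p.2 hc
      have := hsnd hp h2 rfl
      exact congrArg Prod.fst this
    · rintro ⟨h1, h2⟩
      have := hrmem p.2 h1
      rwa [show p = (rf p.2, p.2) from Prod.ext h2 rfl]
  have hranti : ∀ j j' : Fin n, (j : ℕ) < m → (j' : ℕ) < m → j < j' → rf j' < rf j := by
    intro j j' hj hj' hlt
    by_contra hle
    push_neg at hle
    exact hanti (hrmem j hj) (hrmem j' hj')
      (fun h => hlt.ne (congrArg Prod.snd h)) (Prod.le_def.mpr ⟨hle, hlt.le⟩)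
  -- characterization of DSet
  have hDmem : ∀ p : Fin n × Fin n,
      p ∈ DSet α ↔ ((p.2 : ℕ) < m ∧ p.1 < rf p.2 ∧ ∀ k, (p.1, k) ∉ α) := by
    intro p
    constructor
    · rintro ⟨⟨y, hy, hylt⟩, hrow⟩
      have hy2 : (y.2 : ℕ) < m := hcol y hy
      have hy1 : y.1 = rf y.2 := ((hmem_iff y).1 hy).2
      have hple : p.2 ≤ y.2 := (Prod.le_def.1 hylt.le).2
      have hp1 : p.1 ≤ y.1 := (Prod.le_def.1 hylt.le).1
      have hpm : (p.2 : ℕ) < m := lt_of_le_of_lt (by exact_mod_cast hple) hy2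
      refine ⟨hpm, ?_, hrow⟩
      rcases eq_or_lt_of_le hple with he | hlt2
      · have hp1s : p.1 < y.1 := by
          rcases hp1.lt_or_eq with h | h
          · exact h
          · exact absurd hylt ((show p = y from Prod.ext h he) ▸ lt_irrefl _)
        rw [← he] at hy1
        exact hy1 ▸ hp1s
      · have h3 : rf y.2 < rf p.2 := hranti _ _ hpm hy2 hlt2
        exact lt_of_le_of_lt (hy1 ▸ hp1) h3
    · rintro ⟨h1, h2, h3⟩
      exact ⟨⟨(rf p.2, p.2), hrmem _ h1, Prod.lt_iff.mpr (Or.inl ⟨h2, le_rfl⟩)⟩, h3⟩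
  have hdisj : ∀ p ∈ DSet α, p ∉ α := by
    intro p hp hpa
    exact ((hDmem p).1 hp).2.2 p.2 hpa
  -- a matrix in the cell is determined by its entries on DSet α
  have hdet : ∀ M : Matrix (Fin n) (Fin n) F, IsRRCEF M → Piv M = α →
      (∀ p ∈ α, M p.1 p.2 = 1) ∧
      (∀ p : Fin n × Fin n, p ∉ α → p ∉ DSet α → M p.1 p.2 = 0) := by
    intro M hM hpiv
    have hα : α = {p : Fin n × Fin n | IsLast M p.1 p.2} := by
      rw [← hpiv, piv_eq_isLast hM]
    obtain ⟨h1, h2, h3⟩ := hM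
    constructor
    · intro p hp
      have hlp : IsLast M p.1 p.2 := by rw [hα] at hp; exact hp
      exact (h3 _ _ hlp).1
    · intro p hpα hpD
      by_cases hrow : ∃ k, (p.1, k) ∈ α
      · obtain ⟨k, hk⟩ := hrow
        have hlk : IsLast M p.1 k := by rw [hα] at hk; exact hk
        have hkne : p.2 ≠ k := by
          intro h
          exact hpα (by rwa [show p = (p.1, k) from Prod.ext rfl h])
        exact (h3 _ _ hlk).2 p.2 hkne
      · push_neg at hrow
        by_contra h0
        obtain ⟨i'', hi''⟩ := exists_isLast M p.2 ⟨p.1, h0⟩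
        have hmem : (i'', p.2) ∈ α := by rw [hα]; exact hi''
        have hne : p.1 ≠ i'' := by
          intro h; exact hrow p.2 (by rwa [← h] at hmem)
        have hle : p.1 ≤ i'' := by
          by_contra hc; push_neg at hc; exact h0 (hi''.2 p.1 hc)
        exact hpD ⟨⟨(i'', p.2), hmem,
          Prod.lt_iff.mpr (Or.inl ⟨lt_of_le_of_ne hle hne, le_rfl⟩)⟩, hrow⟩
  -- the matrix built from free entries
  set Mf : (↥(DSet α) → F) → Matrix (Fin n) (Fin n) F := fun f i j =>
    if (i, j) ∈ α then 1 else if h : (i, j) ∈ DSet α then f ⟨(i, j), h⟩ else 0 with hMfdef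
  have hMfα : ∀ f, ∀ p ∈ α, Mf f p.1 p.2 = 1 := by
    intro f p hp
    simp only [hMfdef]
    rw [if_pos hp]
  have hMfD : ∀ f, ∀ p : Fin n × Fin n, ∀ h : p ∈ DSet α, Mf f p.1 p.2 = f ⟨p, h⟩ := by
    intro f p h
    simp only [hMfdef]
    rw [if_neg (hdisj p h), dif_pos h]
  have hMf0 : ∀ f, ∀ p : Fin n × Fin n, p ∉ α → p ∉ DSet α → Mf f p.1 p.2 = 0 := by
    intro f p h1 h2
    simp only [hMfdef]
    rw [if_neg h1, dif_neg h2]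
  have hMfne : ∀ f (i j : Fin n), Mf f i j ≠ 0 → (i, j) ∈ α ∨ (i, j) ∈ DSet α := by
    intro f i j h
    by_contra hc
    push_neg at hc
    exact h (hMf0 f (i, j) hc.1 hc.2)
  have hLastMf : ∀ f (i j : Fin n), IsLast (Mf f) i j ↔ (i, j) ∈ α := by
    intro f i j
    constructor
    · rintro ⟨hne, hlast⟩
      rcases hMfne f i j hne with h | h
      · exact h
      · exfalso
        have hd := (hDmem (i, j)).1 h
        have h1 : Mf f (rf j) j = 1 := hMfα f _ (hrmem j hd.1)
        rw [hlast (rf j) hd.2.1] at h1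
        exact zero_ne_one h1
    · intro h
      have hi : i = rf j := ((hmem_iff _).1 h).2
      have hjm : (j : ℕ) < m := ((hmem_iff _).1 h).1
      refine ⟨by rw [hMfα f _ h]; exact one_ne_zero, fun i' hi' => ?_⟩
      apply hMf0 f (i', j)
      · intro hc
        have h2 : i' = rf j := ((hmem_iff _).1 hc).2
        rw [h2, ← hi] at hi'
        exact lt_irrefl i hi'
      · intro hc
        have h2 : i' < rf j := ((hDmem _).1 hc).2.1
        rw [← hi] at h2
        exact absurd h2 (not_lt.mpr hi'.le)
  have hMfRRCEF : ∀ f, IsRRCEF (Mf f) := by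
    intro f
    refine ⟨?_, ?_, ?_⟩
    · rintro j j' hle ⟨i, hi⟩
      have hj'm : (j' : ℕ) < m := by
        rcases hMfne f i j' hi with h | h
        · exact hcol _ h
        · exact ((hDmem _).1 h).1
      have hjm : (j : ℕ) < m := lt_of_le_of_lt (by exact_mod_cast hle) hj'm
      exact ⟨rf j, by rw [hMfα f _ (hrmem j hjm)]; exact one_ne_zero⟩
    · intro i j i' j' h1 h2 hlt
      have hm1' := (hLastMf f i j).1 h1
      have hm2' := (hLastMf f i' j').1 h2
      have e1 : i = rf j := ((hmem_iff _).1 hm1').2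
      have e2 : i' = rf j' := ((hmem_iff _).1 hm2').2
      rw [e1, e2]
      exact hranti j j' ((hmem_iff _).1 hm1').1 ((hmem_iff _).1 hm2').1 hlt
    · intro i j h
      have hmem := (hLastMf f i j).1 h
      refine ⟨hMfα f _ hmem, fun j' hne => ?_⟩
      apply hMf0 f (i, j')
      · intro hc
        exact hne (congrArg Prod.snd (hfst hc hmem rfl))
      · intro hc
        exact ((hDmem _).1 hc).2.2 j hmem
  have hPivMf : ∀ f, Piv (Mf f) = α := by
    intro f
    rw [piv_eq_isLast (hMfRRCEF f)]
    ext ⟨i, j⟩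
    exact hLastMf f i j
  constructor
  · -- cardinality
    have hbij : Function.Bijective
        (fun (M : {M : Matrix (Fin n) (Fin n) F // IsRRCEF M ∧ Piv M = α})
          (p : ↥(DSet α)) => M.1 p.1.1 p.1.2) := by
      constructor
      · rintro ⟨M, hM1, hM2⟩ ⟨N, hN1, hN2⟩ h
        obtain ⟨hα1, hα0⟩ := hdet M hM1 hM2
        obtain ⟨hβ1, hβ0⟩ := hdet N hN1 hN2
        apply Subtype.ext
        funext i j
        show M i j = N i j
        by_cases h1 : (i, j) ∈ α
        · rw [show M i j = 1 from hα1 _ h1, show N i j = 1 from hβ1 _ h1]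
        · by_cases h2 : (i, j) ∈ DSet α
          · exact congrFun h ⟨(i, j), h2⟩
          · rw [show M i j = 0 from hα0 _ h1 h2, show N i j = 0 from hβ0 _ h1 h2]
      · intro f
        refine ⟨⟨Mf f, hMfRRCEF f, hPivMf f⟩, ?_⟩
        funext p
        exact hMfD f p.1 p.2
    rw [Nat.card_eq_of_bijective _ hbij, Nat.card_fun, Nat.card_coe_set_eq,
      Nat.card_eq_fintype_card, hq]
  · -- partition of DSet by rows
    intro l d hdmono hdrange hl
    have hset : (DSet α).toFinset =
        Finset.univ.biUnion (fun i : Fin (n - m) =>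
          ({d i} ×ˢ ({j : Fin n | (d i, j) ∈ DSet α}).toFinset)) := by
      ext p
      simp only [Set.mem_toFinset, Finset.mem_biUnion, Finset.mem_univ, true_and,
        Finset.mem_product, Finset.mem_singleton]
      constructor
      · intro h
        obtain ⟨i, hi⟩ := (hdrange p.1).1 ((hDmem p).1 h).2.2
        refine ⟨i, hi.symm, ?_⟩
        simp only [Set.mem_toFinset, Set.mem_setOf_eq]
        rw [hi]
        exact (show p = (p.1, p.2) from rfl) ▸ h
      · rintro ⟨i, h1, h2⟩
        simp only [Set.mem_toFinset, Set.mem_setOf_eq] at h2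
        rw [show p = (p.1, p.2) from rfl, h1]
        exact h2
    rw [Set.ncard_eq_toFinset_card', hset, Finset.card_biUnion]
    · apply Finset.sum_congr rfl
      intro i _
      rw [hl i, Set.ncard_eq_toFinset_card', Finset.card_product, Finset.card_singleton, one_mul]
    · intro i _ i' _ hne
      simp only [Finset.disjoint_left]
      intro p hp hp'
      rw [Finset.mem_product, Finset.mem_singleton] at hp hp'
      exact hne (hdmono.injective (hp.1 ▸ hp'.1))

end SchubertCell
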